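/- Well-posedness of hue: fix r ∈ (0,1) and θ ∈ ℝ, and let L(r,θ) := (1/2)·log₂((1−r²)/4)·Id₂ + (1/2)·log₂((1+r)/(1−r))·(cos θ · σ₁ + sin θ · σ₂) = log₂ ρ(r,θ). The relative entropy of the pure state ρ(1,φ) with respect to ρ(r,θ), namely f(φ) := −Tr( ρ(1,φ) · L(r,θ) ) (pure states have zero von Neumann entropy), satisfies f(φ) = 1 − (1/2)log₂(1−r²) − (cos(φ−θ)/2)·log₂((1+r)/(1−r)) and attains its minimum over φ ∈ ℝ exactly at the angles φ with φ ≡ θ (mod 2π). Hence the hue of a non-achromatic, non-pure state — the pure state minimizing the relative entropy to it — exists, is unique, and is ρ(1,θ), the pure state whose Bloch vector is parallel to that of ρ(r,θ). -/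
import Mathlib


/-- The density matrix `ρ(r,θ)`. -/
noncomputable def rho (r θ : ℝ) : Matrix (Fin 2) (Fin 2) ℝ :=
  (1 / 2 : ℝ) •
    !![1 + r * Real.cos θ, r * Real.sin θ; r * Real.sin θ, 1 - r * Real.cos θ]

/-- The real Pauli matrix `σ₁`. -/
def sigma1 : Matrix (Fin 2) (Fin 2) ℝ := !![1, 0; 0, -1]

/-- The real Pauli matrix `σ₂`. -/
def sigma2 : Matrix (Fin 2) (Fin 2) ℝ := !![0, 1; 1, 0]

/-- `L(r,θ) = log₂ ρ(r,θ)` written explicitly. -/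
noncomputable def Lmat (r θ : ℝ) : Matrix (Fin 2) (Fin 2) ℝ :=
  ((1 / 2) * Real.logb 2 ((1 - r ^ 2) / 4)) • (1 : Matrix (Fin 2) (Fin 2) ℝ) +
    ((1 / 2) * Real.logb 2 ((1 + r) / (1 - r))) •
      (Real.cos θ • sigma1 + Real.sin θ • sigma2)

/-- Well-posedness of hue: for `0 < r < 1`, the relative entropy
`f(φ) = −Tr(ρ(1,φ)·log₂ ρ(r,θ))` of the pure state `ρ(1,φ)` with respect to `ρ(r,θ)`
equals `1 − (1/2)log₂(1−r²) − (cos(φ−θ)/2)·log₂((1+r)/(1−r))`, and it attains its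
minimum over `φ ∈ ℝ` exactly at the angles `φ ≡ θ (mod 2π)`: the hue exists, is unique,
and is the pure state `ρ(1,θ)` whose Bloch vector is parallel to that of `ρ(r,θ)`. -/
theorem hue_wellPosed (r θ : ℝ) (hr : r ∈ Set.Ioo (0 : ℝ) 1) :
    (∀ φ : ℝ, -(rho 1 φ * Lmat r θ).trace =
        1 - (1 / 2) * Real.logb 2 (1 - r ^ 2)
          - (Real.cos (φ - θ) / 2) * Real.logb 2 ((1 + r) / (1 - r))) ∧
    (∀ φ : ℝ, -(rho 1 θ * Lmat r θ).trace ≤ -(rho 1 φ * Lmat r θ).trace) ∧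
    (∀ φ : ℝ, -(rho 1 φ * Lmat r θ).trace = -(rho 1 θ * Lmat r θ).trace ↔
        ∃ k : ℤ, φ = θ + 2 * Real.pi * k) := by
  have key : ∀ φ : ℝ, -(rho 1 φ * Lmat r θ).trace =
      1 - (1 / 2) * Real.logb 2 (1 - r ^ 2)
        - (Real.cos (φ - θ) / 2) * Real.logb 2 ((1 + r) / (1 - r)) := by
    intro φ
    have h1 : (1 : ℝ) - r ^ 2 ≠ 0 := by nlinarith [hr.1, hr.2]
    have h2 : Real.logb 2 4 = 2 := by
      rw [show (4:ℝ) = 2 ^ (2:ℕ) by norm_num, Real.logb_pow]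
      norm_num [Real.logb_self_eq_one]
    have hsplit : Real.logb 2 ((1 - r ^ 2) / 4) = Real.logb 2 (1 - r ^ 2) - 2 := by
      rw [Real.logb_div h1 (by norm_num), h2]
    simp only [rho, Lmat, sigma1, sigma2, Matrix.trace_fin_two, Matrix.mul_apply,
      Fin.sum_univ_two, Matrix.smul_apply, Matrix.add_apply, Matrix.one_apply,
      Matrix.cons_val', Matrix.cons_val_zero, Matrix.cons_val_one, Matrix.head_cons,
      Matrix.head_fin_const, Matrix.empty_val', Matrix.cons_val_fin_one,
      Matrix.of_apply, smul_eq_mul]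
    norm_num [hsplit, Real.cos_sub]
    ring
  have hL : 0 < Real.logb 2 ((1 + r) / (1 - r)) := by
    apply Real.logb_pos one_lt_two
    rw [lt_div_iff₀ (by linarith [hr.2])]
    linarith [hr.1]
  refine ⟨key, fun φ => ?_, fun φ => ?_⟩
  · rw [key φ, key θ]
    simp only [sub_self, Real.cos_zero]
    nlinarith [Real.cos_le_one (φ - θ)]
  · rw [key φ, key θ]
    simp only [sub_self, Real.cos_zero]
    constructor
    · intro h
      have hc : Real.cos (φ - θ) = 1 := by
        have := hL
        nlinarith
      obtain ⟨n, hn⟩ := (Real.cos_eq_one_iff _).1 hc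
      exact ⟨n, by linarith⟩
    · rintro ⟨k, rfl⟩
      have : Real.cos (θ + 2 * Real.pi * k - θ) = 1 := by
        rw [show θ + 2 * Real.pi * k - θ = k * (2 * Real.pi) by ring]
        exact (Real.cos_eq_one_iff _).2 ⟨k, rfl⟩
      rw [this]
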